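/- In the regular triangular tiling, two triangles in a set A are vertex-connected through A (joined by a chain of triangles in A where consecutive triangles share at least a vertex) if and only if their cubulation images can be joined by a chain of images of triangles in A where consecutive images differ by at most 1 in each of the three coordinates (26-connectivity on Z^3). -/

import Mathlib

noncomputable def lineF : Fin 3 → ℝ × ℝ → ℝ := fun i p =>
  if i = 0 then p.2 - 1/3
  else if i = 1 then (Real.sqrt 3 * p.1 - p.2) / 2 - 1/3
  else -(Real.sqrt 3 * p.1 + p.2) / 2 - 1/3

def triRegion (v : Fin 3 → ℤ) : Set (ℝ × ℝ) :=
  {p | ∀ i : Fin 3, ((v i : ℝ) - 1 ≤ lineF i p ∧ lineF i p ≤ (v i : ℝ))}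

def IsTile (v : Fin 3 → ℤ) : Prop := (interior (triRegion v)).Nonempty

abbrev Tile : Type := {v : Fin 3 → ℤ // IsTile v}

def Tile.region (T : Tile) : Set (ℝ × ℝ) := triRegion T.val

def EdgeAdj (T U : Tile) : Prop := T ≠ U ∧ ¬ (T.region ∩ U.region).Subsingleton

def VertexAdj (T U : Tile) : Prop := T ≠ U ∧ (T.region ∩ U.region).Nonempty

def sumv (v : Fin 3 → ℤ) : ℤ := v 0 + v 1 + v 2

def dualGraph : SimpleGraph Tile where
  Adj := EdgeAdj
  symm := ⟨fun T U h => ⟨h.1.symm, fun hs => h.2 (by rwa [Set.inter_comm] at hs)⟩⟩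
  loopless := ⟨fun T h => h.1 rfl⟩

lemma sqrt3_pos : (0:ℝ) < Real.sqrt 3 := Real.sqrt_pos.mpr (by norm_num)

lemma lineF_sum (p : ℝ × ℝ) : lineF 0 p + lineF 1 p + lineF 2 p = -1 := by
  simp [lineF]
  ring

lemma lineF_inj (p q : ℝ × ℝ) (h : ∀ i, lineF i p = lineF i q) : p = q := by
  have h0 := h 0
  have h1 := h 1
  simp [lineF] at h0 h1
  have hy : p.2 = q.2 := by linarith
  have hx : p.1 = q.1 := by
    have h3 := sqrt3_pos
    have : Real.sqrt 3 * p.1 = Real.sqrt 3 * q.1 := by linarith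
    exact mul_left_cancel₀ (ne_of_gt h3) this
  exact Prod.ext hx hy

lemma lineF_surj (t : Fin 3 → ℝ) (ht : t 0 + t 1 + t 2 = -1) :
    ∃ p : ℝ × ℝ, ∀ i, lineF i p = t i := by
  have h3 := sqrt3_pos
  have h3' : Real.sqrt 3 ≠ 0 := ne_of_gt h3
  refine ⟨((2 * t 1 + t 0 + 1) / Real.sqrt 3, t 0 + 1/3), fun i => ?_⟩
  have hmul : Real.sqrt 3 * ((2 * t 1 + t 0 + 1) / Real.sqrt 3) = 2 * t 1 + t 0 + 1 := by
    field_simp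
  fin_cases i <;> simp [lineF, hmul] <;> linarith

/-- A nonempty open subset of the plane is not a subsingleton. -/
lemma not_subsingleton_of_isOpen {s : Set (ℝ × ℝ)} (hs : IsOpen s) (hn : s.Nonempty) :
    ¬ s.Subsingleton := by
  intro hsub
  obtain ⟨p, hp⟩ := hn
  obtain ⟨ε, hε, hball⟩ := Metric.isOpen_iff.mp hs p hp
  have hqs : ((p.1 + ε/2, p.2) : ℝ × ℝ) ∈ s := by
    apply hball
    rw [Metric.mem_ball, Prod.dist_eq]
    have hd1 : dist (p.1 + ε/2) p.1 = ε/2 := by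
      rw [Real.dist_eq, add_sub_cancel_left]
      exact abs_of_pos (half_pos hε)
    simp only [hd1, dist_self]
    rw [max_eq_left (le_of_lt (half_pos hε))]
    linarith
  have heq := hsub hqs hp
  have h1 : p.1 + ε/2 = p.1 := congrArg Prod.fst heq
  linarith

lemma sumv_mem_of_isTile {v : Fin 3 → ℤ} (hv : IsTile v) : sumv v = 0 ∨ sumv v = 1 := by
  obtain ⟨p, hp⟩ := hv
  have hpreg : p ∈ triRegion v := interior_subset hp
  have hsum := lineF_sum p
  have h0 := hpreg 0
  have h1 := hpreg 1
  have h2 := hpreg 2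
  -- bounds on the sum
  have hge : (-1 : ℝ) ≤ (v 0 : ℝ) + v 1 + v 2 := by linarith [h0.2, h1.2, h2.2]
  have hle : ((v 0 : ℝ) + v 1 + v 2) - 3 ≤ -1 := by linarith [h0.1, h1.1, h2.1]
  have hge' : (-1 : ℤ) ≤ sumv v := by
    have h : ((-1 : ℤ) : ℝ) ≤ ((sumv v : ℤ) : ℝ) := by push_cast [sumv]; linarith
    exact_mod_cast h
  have hle' : sumv v ≤ 2 := by
    have h : ((sumv v : ℤ) : ℝ) ≤ ((2 : ℤ) : ℝ) := by push_cast [sumv]; linarith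
    exact_mod_cast h
  -- exclude the degenerate cases -1 and 2 where the region is a single point
  have hdeg : ∀ c : Fin 3 → ℝ, c 0 + c 1 + c 2 = -1 →
      (∀ q ∈ triRegion v, ∀ i, lineF i q = c i) → False := by
    intro c hc hforce
    have hsub : (triRegion v).Subsingleton := by
      intro x hx y hy
      exact lineF_inj x y (fun i => by rw [hforce x hx i, hforce y hy i])
    have hsub' : (interior (triRegion v)).Subsingleton :=
      hsub.anti interior_subset
    exact not_subsingleton_of_isOpen isOpen_interior ⟨p, hp⟩ hsub'
  have hne1 : sumv v ≠ -1 := by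
    intro hs
    have hvs : ((v 0 : ℝ)) + v 1 + v 2 = -1 := by
      have h : ((sumv v : ℤ) : ℝ) = ((-1 : ℤ) : ℝ) := by exact_mod_cast hs
      push_cast [sumv] at h
      linarith
    refine hdeg (fun i => (v i : ℝ)) ?_ ?_
    · show ((v 0 : ℝ)) + (v 1 : ℝ) + (v 2 : ℝ) = -1
      linarith
    · intro q hq i
      have hqs := lineF_sum q
      have hq0 := hq 0
      have hq1 := hq 1
      have hq2 := hq 2
      fin_cases i <;> simp <;> linarith [hq0.2, hq1.2, hq2.2]
  have hne2 : sumv v ≠ 2 := by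
    intro hs
    have hvs : ((v 0 : ℝ)) + v 1 + v 2 = 2 := by
      have h : ((sumv v : ℤ) : ℝ) = ((2 : ℤ) : ℝ) := by exact_mod_cast hs
      push_cast [sumv] at h
      linarith
    refine hdeg (fun i => (v i : ℝ) - 1) ?_ ?_
    · show ((v 0 : ℝ) - 1) + ((v 1 : ℝ) - 1) + ((v 2 : ℝ) - 1) = -1
      linarith
    · intro q hq i
      have hqs := lineF_sum q
      have hq0 := hq 0
      have hq1 := hq 1
      have hq2 := hq 2
      fin_cases i <;> simp <;> linarith [hq0.1, hq1.1, hq2.1]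
  omega

/-- Key geometric lemma: the regions of two tiles intersect iff their coordinate
vectors differ by at most 1 in each coordinate. -/
lemma regions_inter_iff (v w : Fin 3 → ℤ) (hv : IsTile v) (hw : IsTile w) :
    (triRegion v ∩ triRegion w).Nonempty ↔ ∀ i : Fin 3, |v i - w i| ≤ 1 := by
  constructor
  · rintro ⟨p, hpv, hpw⟩ i
    have h1 := (hpv i).1
    have h2 := (hpv i).2
    have h3 := (hpw i).1
    have h4 := (hpw i).2
    rw [abs_le]
    constructor
    · have : (v i : ℝ) - w i ≥ -1 := by linarith
      exact_mod_cast this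
    · have : (v i : ℝ) - w i ≤ 1 := by linarith
      exact_mod_cast this
  · intro hd
    have hsv := sumv_mem_of_isTile hv
    have hsw := sumv_mem_of_isTile hw
    -- integer bounds
    set a : Fin 3 → ℤ := fun i => max (v i) (w i) - 1 with ha
    set b : Fin 3 → ℤ := fun i => min (v i) (w i) with hb
    have hab : ∀ i, a i ≤ b i := by
      intro i
      have := hd i
      rw [abs_le] at this
      simp [ha, hb]
      omega
    have hd0 := hd 0; have hd1 := hd 1; have hd2 := hd 2
    rw [abs_le] at hd0 hd1 hd2
    have hA : a 0 + a 1 + a 2 ≤ -1 := by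
      simp only [ha, sumv] at *
      omega
    have hB : -1 ≤ b 0 + b 1 + b 2 := by
      simp only [hb, sumv] at *
      omega
    -- construct a real point t with a ≤ t ≤ b and sum t = -1
    set A : ℝ := (a 0 : ℝ) + a 1 + a 2 with hAdef
    set B : ℝ := (b 0 : ℝ) + b 1 + b 2 with hBdef
    have hAle : A ≤ -1 := by
      have : ((a 0 + a 1 + a 2 : ℤ) : ℝ) ≤ ((-1 : ℤ) : ℝ) := by exact_mod_cast hA
      push_cast at this; rw [hAdef]; linarith
    have hBge : (-1 : ℝ) ≤ B := by
      have : ((-1 : ℤ) : ℝ) ≤ ((b 0 + b 1 + b 2 : ℤ) : ℝ) := by exact_mod_cast hB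
      push_cast at this; rw [hBdef]; linarith
    have habR : ∀ i, (a i : ℝ) ≤ (b i : ℝ) := fun i => by exact_mod_cast hab i
    have hABle : A ≤ B := by
      rw [hAdef, hBdef]
      linarith [habR 0, habR 1, habR 2]
    obtain ⟨t, htab, htsum⟩ : ∃ t : Fin 3 → ℝ,
        (∀ i, (a i : ℝ) ≤ t i ∧ t i ≤ (b i : ℝ)) ∧ t 0 + t 1 + t 2 = -1 := by
      by_cases hAB : A = B
      · refine ⟨fun i => (a i : ℝ), fun i => ⟨le_refl _, habR i⟩, ?_⟩
        rw [← hAdef]; linarith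
      · have hABlt : A < B := lt_of_le_of_ne hABle hAB
        set lam : ℝ := (-1 - A) / (B - A) with hlam
        have hlam0 : 0 ≤ lam := by
          apply div_nonneg <;> linarith
        have hlam1 : lam ≤ 1 := by
          rw [hlam, div_le_one (by linarith)]
          linarith
        have hneAB : B - A ≠ 0 := by intro h; apply hAB; linarith
        refine ⟨fun i => (a i : ℝ) + lam * ((b i : ℝ) - a i), fun i => ?_, ?_⟩
        · have hprod1 : 0 ≤ lam * ((b i : ℝ) - a i) :=
            mul_nonneg hlam0 (by linarith [habR i])
          have hprod2 : 0 ≤ (1 - lam) * ((b i : ℝ) - a i) :=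
            mul_nonneg (by linarith) (by linarith [habR i])
          constructor
          · show (a i : ℝ) ≤ (a i : ℝ) + lam * ((b i : ℝ) - a i)
            linarith
          · show (a i : ℝ) + lam * ((b i : ℝ) - a i) ≤ (b i : ℝ)
            nlinarith
        · show (a 0 : ℝ) + lam * ((b 0 : ℝ) - a 0) + ((a 1 : ℝ) + lam * ((b 1 : ℝ) - a 1)) +
              ((a 2 : ℝ) + lam * ((b 2 : ℝ) - a 2)) = -1
          have hsum : (a 0 : ℝ) + lam * ((b 0 : ℝ) - a 0) + ((a 1 : ℝ) + lam * ((b 1 : ℝ) - a 1)) +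
              ((a 2 : ℝ) + lam * ((b 2 : ℝ) - a 2)) = A + lam * (B - A) := by
            rw [hAdef, hBdef]; ring
          rw [hsum, hlam, div_mul_cancel₀ _ hneAB]
          ring
    obtain ⟨p, hp⟩ := lineF_surj t htsum
    refine ⟨p, fun i => ?_, fun i => ?_⟩ <;>
    · rw [hp i]
      have h1 := (htab i).1
      have h2 := (htab i).2
      have hav : ((v i : ℝ)) - 1 ≤ (a i : ℝ) := by
        have h : v i - 1 ≤ a i := by simp only [ha]; omega
        exact_mod_cast h
      have haw : ((w i : ℝ)) - 1 ≤ (a i : ℝ) := by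
        have h : w i - 1 ≤ a i := by simp only [ha]; omega
        exact_mod_cast h
      have hbv : (b i : ℝ) ≤ (v i : ℝ) := by
        have h : b i ≤ v i := by simp only [hb]; omega
        exact_mod_cast h
      have hbw : (b i : ℝ) ≤ (w i : ℝ) := by
        have h : b i ≤ w i := by simp only [hb]; omega
        exact_mod_cast h
      constructor <;> linarith

theorem vertex_connectivity_iff_26_connectivity (A : Set Tile) (T U : Tile)
    (hT : T ∈ A) (hU : U ∈ A) :
    Relation.ReflTransGen (fun x y : Tile => x ∈ A ∧ y ∈ A ∧ VertexAdj x y) T U ↔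
    Relation.ReflTransGen (fun x y : Tile => x ∈ A ∧ y ∈ A ∧
      x.val ≠ y.val ∧ ∀ i : Fin 3, |x.val i - y.val i| ≤ 1) T U := by
  have key : ∀ x y : Tile, (x ∈ A ∧ y ∈ A ∧ VertexAdj x y) ↔
      (x ∈ A ∧ y ∈ A ∧ x.val ≠ y.val ∧ ∀ i : Fin 3, |x.val i - y.val i| ≤ 1) := by
    intro x y
    constructor
    · rintro ⟨hx, hy, hne, hinter⟩
      exact ⟨hx, hy, fun h => hne (Subtype.ext h),
        (regions_inter_iff x.val y.val x.prop y.prop).mp hinter⟩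
    · rintro ⟨hx, hy, hne, hd⟩
      exact ⟨hx, hy, fun h => hne (congrArg Subtype.val h),
        (regions_inter_iff x.val y.val x.prop y.prop).mpr hd⟩
  constructor
  · exact Relation.ReflTransGen.mono (fun x y h => (key x y).mp h) T U
  · exact Relation.ReflTransGen.mono (fun x y h => (key x y).mpr h) T U
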